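/- arXiv:2009.11972 — 7 statements merged into one kernel-verified Lean document; each statement's English description precedes it below -/
import Mathlib

section
/- Let n and t be integers. A triple of integers (x, y, z) satisfies x^3 + y^3 + z^3 = n and x + y + z = t if and only if the integers A = x - t, B = y - t, C = z - t satisfy 3*A*B*C = n - t^3 and A + B + C = -2*t. -/
theorem cube_sum_height_equiv (n t x y z : ℤ) :
    (x ^ 3 + y ^ 3 + z ^ 3 = n ∧ x + y + z = t) ↔
      (3 * ((x - t) * (y - t) * (z - t)) = n - t ^ 3 ∧
        (x - t) + (y - t) + (z - t) = -2 * t) := by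
  constructor
  · rintro ⟨h1, h2⟩
    constructor
    · have : t = x + y + z := h2.symm
      subst this
      linear_combination h1
    · linarith
  · rintro ⟨h1, h2⟩
    have ht : x + y + z = t := by linarith
    constructor
    · have : t = x + y + z := ht.symm
      subst this
      linear_combination h1
    · exact ht
end

section
/- Let n and t be integers with n ≠ t^3. Then the set of triples (x, y, z) of integers satisfying x^3 + y^3 + z^3 = n and x + y + z = t is finite. -/
theorem cube_sum_height_finite (n t : ℤ) (h : n ≠ t ^ 3) :
    {p : ℤ × ℤ × ℤ | p.1 ^ 3 + p.2.1 ^ 3 + p.2.2 ^ 3 = n ∧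
      p.1 + p.2.1 + p.2.2 = t}.Finite := by
  set d : ℤ := t ^ 3 - n with hd
  have hdne : d ≠ 0 := by
    intro h0
    apply h
    omega
  apply Set.Finite.subset
    (((Set.finite_Icc (t - |d|) (t + |d|)).prod
      ((Set.finite_Icc (t - |d|) (t + |d|)).prod
        (Set.finite_Icc (t - |d|) (t + |d|)))))
  rintro ⟨x, y, z⟩ ⟨h1, h2⟩
  simp only [Set.mem_setOf_eq] at h1 h2
  have key : d = 3 * (t - x) * (t - y) * (t - z) := by
    rw [hd, ← h1, ← h2]; ring
  have hx : (t - x) ∣ d := ⟨3 * (t - y) * (t - z), by linarith [key]⟩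
  have hy : (t - y) ∣ d := ⟨3 * (t - x) * (t - z), by linarith [key]⟩
  have hz : (t - z) ∣ d := ⟨3 * (t - x) * (t - y), by linarith [key]⟩
  have bx := abs_le.mp (Int.le_of_dvd (abs_pos.mpr hdne) ((abs_dvd _ _).mpr ((dvd_abs _ _).mpr hx)))
  have by' := abs_le.mp (Int.le_of_dvd (abs_pos.mpr hdne) ((abs_dvd _ _).mpr ((dvd_abs _ _).mpr hy)))
  have bz := abs_le.mp (Int.le_of_dvd (abs_pos.mpr hdne) ((abs_dvd _ _).mpr ((dvd_abs _ _).mpr hz)))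
  simp only [Set.mem_prod, Set.mem_Icc]
  omega
end

section
/- Let n and t be integers with n ≠ t^3 and 3 | (n - t^3), and set N = (n - t^3)/3. Then the set of triples (x, y, z) of integers with x^3 + y^3 + z^3 = n and x + y + z = t has the same (finite) cardinality as the set of pairs (d, δ) of nonzero integers such that d divides N, δ divides d, and δ + d/δ + N/d = -2*t. A bijection is given by (x, y, z) ↦ (d, δ) = ((x - t)*(y - t), x - t). -/
theorem representation_count_eq_divisor_pairs (n t : ℤ) (hn : n ≠ t ^ 3)
    (h3 : 3 ∣ n - t ^ 3) (N : ℤ) (hN : N = (n - t ^ 3) / 3) :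
    {p : ℤ × ℤ × ℤ | p.1 ^ 3 + p.2.1 ^ 3 + p.2.2 ^ 3 = n ∧
        p.1 + p.2.1 + p.2.2 = t}.Finite ∧
    Set.BijOn (fun p : ℤ × ℤ × ℤ => ((p.1 - t) * (p.2.1 - t), p.1 - t))
      {p : ℤ × ℤ × ℤ | p.1 ^ 3 + p.2.1 ^ 3 + p.2.2 ^ 3 = n ∧
        p.1 + p.2.1 + p.2.2 = t}
      {q : ℤ × ℤ | q.1 ≠ 0 ∧ q.2 ≠ 0 ∧ q.1 ∣ N ∧ q.2 ∣ q.1 ∧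
        q.2 + q.1 / q.2 + N / q.1 = -2 * t} ∧
    Nat.card {p : ℤ × ℤ × ℤ | p.1 ^ 3 + p.2.1 ^ 3 + p.2.2 ^ 3 = n ∧
        p.1 + p.2.1 + p.2.2 = t} =
      Nat.card {q : ℤ × ℤ | q.1 ≠ 0 ∧ q.2 ≠ 0 ∧ q.1 ∣ N ∧ q.2 ∣ q.1 ∧
        q.2 + q.1 / q.2 + N / q.1 = -2 * t} := by
  have h3N : 3 * N = n - t ^ 3 := by rw [hN]; exact Int.mul_ediv_cancel' h3
  have hNne : N ≠ 0 := by
    intro h; rw [h, mul_zero] at h3N; exact hn (by linarith)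
  set S := {p : ℤ × ℤ × ℤ | p.1 ^ 3 + p.2.1 ^ 3 + p.2.2 ^ 3 = n ∧
      p.1 + p.2.1 + p.2.2 = t} with hS
  set T := {q : ℤ × ℤ | q.1 ≠ 0 ∧ q.2 ≠ 0 ∧ q.1 ∣ N ∧ q.2 ∣ q.1 ∧
      q.2 + q.1 / q.2 + N / q.1 = -2 * t} with hT
  set f := fun p : ℤ × ℤ × ℤ => ((p.1 - t) * (p.2.1 - t), p.1 - t) with hf
  -- key: for p ∈ S, (x-t)(y-t)(z-t) = N
  have key : ∀ p : ℤ × ℤ × ℤ, p ∈ S →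
      (p.1 - t) * (p.2.1 - t) * (p.2.2 - t) = N := by
    rintro ⟨x, y, z⟩ ⟨h1, h2⟩
    have : 3 * ((x - t) * (y - t) * (z - t)) = 3 * N := by
      rw [h3N]
      linear_combination h1 - (x^2 + y^2 + z^2 - x*y - y*z - z*x + t*x + t*y + t*z - 2*t^2) * h2
    linarith
  have hmap : Set.MapsTo f S T := by
    rintro ⟨x, y, z⟩ hp
    obtain ⟨h1, h2⟩ := hp
    have habc := key (x, y, z) ⟨h1, h2⟩
    simp only [hT, hf, Set.mem_setOf_eq] at *
    have ha : x - t ≠ 0 := by intro h; rw [h] at habc; simp at habc; exact hNne habc.symm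
    have hb : y - t ≠ 0 := by intro h; rw [h] at habc; simp at habc; exact hNne habc.symm
    have hab : (x - t) * (y - t) ≠ 0 := mul_ne_zero ha hb
    refine ⟨hab, ha, ⟨z - t, habc.symm⟩, ⟨y - t, rfl⟩, ?_⟩
    rw [Int.mul_ediv_cancel_left _ ha, ← habc, Int.mul_ediv_cancel_left _ hab]
    linarith
  have hinj : Set.InjOn f S := by
    rintro ⟨x1, y1, z1⟩ hp1 ⟨x2, y2, z2⟩ hp2 heq
    have k1 := key _ hp1
    have k2 := key _ hp2
    simp only [hf, Prod.mk.injEq] at heq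
    obtain ⟨hd, ha⟩ := heq
    have hx : x1 = x2 := by linarith
    have ha0 : x1 - t ≠ 0 := by
      intro h; rw [h] at k1; simp at k1; exact hNne k1.symm
    have hy : y1 = y2 := by
      have := mul_left_cancel₀ ha0 (by rw [hd, ha] : (x1 - t) * (y1 - t) = (x1 - t) * (y2 - t))
      linarith
    have hd0 : (x1 - t) * (y1 - t) ≠ 0 := by
      intro h; rw [h] at k1; simp at k1; exact hNne k1.symm
    have hz : z1 = z2 := by
      have : (x1 - t) * (y1 - t) * (z1 - t) = (x1 - t) * (y1 - t) * (z2 - t) := by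
        rw [k1, ← k2, hx, hy]
      have := mul_left_cancel₀ hd0 this
      linarith
    simp [hx, hy, hz]
  have hsurj : Set.SurjOn f S T := by
    rintro ⟨d, δ⟩ ⟨hd0, hδ0, hdN, hδd, hsum⟩
    set b := d / δ with hb
    set c := N / d with hc
    have hδb : δ * b = d := Int.mul_ediv_cancel' hδd
    have hdc : d * c = N := Int.mul_ediv_cancel' hdN
    have hsum' : δ + b + c = -2 * t := hsum
    refine ⟨(δ + t, b + t, c + t), ⟨?_, show δ + t + (b + t) + (c + t) = t by linarith⟩, ?_⟩
    · show (δ + t) ^ 3 + (b + t) ^ 3 + (c + t) ^ 3 = n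
      have hcval : c = -2 * t - δ - b := by linarith
      have hNval : N = δ * b * c := by rw [← hdc, ← hδb]
      have hn' : n = 3 * (δ * b * c) + t ^ 3 := by rw [← hNval]; linarith
      rw [hn', hcval]; ring
    · simp [hf, hδb]
  have hbij : Set.BijOn f S T := ⟨hmap, hinj, hsurj⟩
  have hTfin : T.Finite := by
    have hsub : T ⊆ Set.Icc (-|N|) |N| ×ˢ Set.Icc (-|N|) |N| := by
      rintro ⟨d, δ⟩ ⟨hd0, hδ0, hdN, hδd, -⟩
      have hdd : |d| ≤ |N| := Int.le_of_dvd (abs_pos.2 hNne) ((abs_dvd_abs _ _).2 hdN)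
      have hδδ : |δ| ≤ |N| :=
        Int.le_of_dvd (abs_pos.2 hNne) ((abs_dvd_abs _ _).2 (hδd.trans hdN))
      constructor <;> rw [Set.mem_Icc] <;> constructor <;>
        simp only [] <;> [linarith [neg_abs_le d, le_abs_self d];
          linarith [neg_abs_le d, le_abs_self d];
          linarith [neg_abs_le δ, le_abs_self δ];
          linarith [neg_abs_le δ, le_abs_self δ]]
    exact Set.Finite.subset ((Set.finite_Icc _ _).prod (Set.finite_Icc _ _)) hsub
  have hSfin : S.Finite := by
    refine Set.Finite.of_finite_image ?_ hinj
    rw [hbij.image_eq]; exact hTfin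
  exact ⟨hSfin, hbij, Nat.card_congr (hbij.equiv f)⟩
end

section
/- Let n and t be integers with n ≠ t^3 and 3 | (n - t^3), and set N = (n - t^3)/3. If integers x, y, z satisfy x^3 + y^3 + z^3 = n and x + y + z = t, then there exists a nonzero integer d dividing N and an integer k such that (N/d + 2*t)^2 - 4*d = k^2. -/
theorem divisor_square_of_representation (n t : ℤ) (hn : n ≠ t ^ 3)
    (h3 : 3 ∣ n - t ^ 3) (N : ℤ) (hN : N = (n - t ^ 3) / 3)
    (x y z : ℤ) (h1 : x ^ 3 + y ^ 3 + z ^ 3 = n) (h2 : x + y + z = t) :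
    ∃ d k : ℤ, d ≠ 0 ∧ d ∣ N ∧ (N / d + 2 * t) ^ 2 - 4 * d = k ^ 2 := by
  have hz : z = t - x - y := by linarith
  have hkey : n - t ^ 3 = 3 * ((x - t) * (y - t) * (z - t)) := by
    subst hz h1; ring
  have hNval : N = (x - t) * (y - t) * (z - t) := by
    rw [hN, hkey]
    exact Int.mul_ediv_cancel_left _ (by norm_num)
  have hN0 : N ≠ 0 := by
    intro h
    apply hn
    have : n - t ^ 3 = 0 := by
      rw [hkey]; rw [hNval] at h; rw [h]; ring
    linarith
  have hd0 : (x - t) * (y - t) ≠ 0 := by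
    intro h
    apply hN0
    rw [hNval, h, zero_mul]
  refine ⟨(x - t) * (y - t), x - y, hd0, ⟨z - t, hNval⟩, ?_⟩
  have hdiv : N / ((x - t) * (y - t)) = z - t := by
    rw [hNval]
    exact Int.mul_ediv_cancel_left _ hd0
  rw [hdiv]
  have : z - t + 2 * t = -((x - t) + (y - t)) := by rw [hz]; ring
  rw [this]; ring
end

section
/- Let n and t be integers with n ≠ t^3 and 3 | (n - t^3), and set N = (n - t^3)/3. If there exist a nonzero integer d dividing N and an integer k with (N/d + 2*t)^2 - 4*d = k^2, then there exist integers x, y, z with x^3 + y^3 + z^3 = n and x + y + z = t. -/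
theorem representation_of_divisor_square (n t : ℤ) (hn : n ≠ t ^ 3)
    (h3 : 3 ∣ n - t ^ 3) (N : ℤ) (hN : N = (n - t ^ 3) / 3)
    (h : ∃ d k : ℤ, d ≠ 0 ∧ d ∣ N ∧ (N / d + 2 * t) ^ 2 - 4 * d = k ^ 2) :
    ∃ x y z : ℤ, x ^ 3 + y ^ 3 + z ^ 3 = n ∧ x + y + z = t := by
  obtain ⟨d, k, hd0, hdvd, heq⟩ := h
  set e : ℤ := N / d with he
  have hde : d * e = N := Int.mul_ediv_cancel' hdvd
  have hc3 : 3 * N = n - t ^ 3 := by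
    obtain ⟨c, hc⟩ := h3
    rw [hN, hc]
    omega
  -- parity: k ≡ e + 2t (mod 2)
  have hiff : Even (k ^ 2) ↔ Even ((e + 2 * t) ^ 2) := by
    have heq' : k ^ 2 = (e + 2 * t) ^ 2 - 4 * d := by linarith [heq]
    rw [heq']
    constructor
    · intro h
      have := h.add (⟨2 * d, by ring⟩ : Even (4 * d))
      simpa using this
    · intro h
      exact h.sub ⟨2 * d, by ring⟩
  have hiff2 : Even k ↔ Even (e + 2 * t) := by
    simpa [Int.even_pow] using hiff
  obtain ⟨m, hm⟩ : Even (k - (e + 2 * t)) := (Int.even_sub).mpr hiff2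
  have hk : k = 2 * m + e + 2 * t := by omega
  have hd4 : 4 * d = 4 * (-(m ^ 2) - m * (e + 2 * t)) := by
    subst hk
    linear_combination -heq
  have hd : d = -(m ^ 2) - m * (e + 2 * t) := by linarith
  refine ⟨t + m, -t - e - m, t + e, ?_, by ring⟩
  linear_combination hc3 + 3 * hde - 3 * e * hd
end

section
/- Let n be a positive integer with 6 | n. If there exist a positive integer d dividing n/3 and an integer k such that (n/(3*d))^2 - 4*d = k^2, then there exist integers x, y, z with x + y + z = 0 and x^3 + y^3 + z^3 = n. -/
theorem height_zero_representation (n : ℤ) (hn : 0 < n) (h6 : 6 ∣ n)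
    (h : ∃ d : ℤ, 0 < d ∧ d ∣ n / 3 ∧ ∃ k : ℤ,
      (n / (3 * d)) ^ 2 - 4 * d = k ^ 2) :
    ∃ x y z : ℤ, x + y + z = 0 ∧ x ^ 3 + y ^ 3 + z ^ 3 = n := by
  obtain ⟨d, hd, hdvd, k, hk⟩ := h
  have h3 : (3 : ℤ) ∣ n := dvd_trans ⟨2, rfl⟩ h6
  obtain ⟨e, he⟩ : 3 * d ∣ n := by
    obtain ⟨c, hc⟩ := hdvd
    exact ⟨c, by rw [Int.eq_mul_of_ediv_eq_right h3 hc]; ring⟩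
  have hne : (3 : ℤ) * d ≠ 0 := by positivity
  have hq : n / (3 * d) = e := by rw [he, Int.mul_ediv_cancel_left _ hne]
  rw [hq] at hk
  -- e and k have the same parity
  have hpar : Even (e - k) := by
    have h1 : Even (e ^ 2 - k ^ 2) := ⟨2 * d, by linarith⟩
    have h2 : (Even (e ^ 2) ↔ Even (k ^ 2)) := Int.even_sub.mp h1
    rw [Int.even_pow, Int.even_pow] at h2
    exact Int.even_sub.mpr ⟨fun h => (h2.1 ⟨h, by norm_num⟩).1,
      fun h => (h2.2 ⟨h, by norm_num⟩).1⟩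
  obtain ⟨u, hu⟩ := hpar
  refine ⟨-u, -u - k, e, by linarith, ?_⟩
  have hk2 : k = e - 2 * u := by linarith
  subst hk2
  have hd2 : d = u * e - u ^ 2 := by nlinarith [hk]
  rw [he, hd2]
  ring
end

section
/- Let n be a nonzero integer. The set of pairs (x, y) of integers with x*y*(x - y - 1) = n has the same (finite) cardinality as the set of pairs (d, δ) of nonzero integers such that d divides n, δ divides d, and δ + d/δ - n/d = -1. -/
lemma fin_dvd_set (n : ℤ) (hn : n ≠ 0) : {d : ℤ | d ∣ n}.Finite := by
  apply (Set.finite_Icc (-|n|) |n|).subset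
  intro d hd
  have h : |d| ≤ |n| :=
    Int.le_of_dvd (abs_pos.mpr hn) ((abs_dvd _ _).mpr ((dvd_abs _ _).mpr hd))
  exact Set.mem_Icc.mpr (abs_le.mp h)

theorem reduced_equation_count (n : ℤ) (hn : n ≠ 0) :
    {p : ℤ × ℤ | p.1 * p.2 * (p.1 - p.2 - 1) = n}.Finite ∧
    {q : ℤ × ℤ | q.1 ≠ 0 ∧ q.2 ≠ 0 ∧ q.1 ∣ n ∧ q.2 ∣ q.1 ∧
      q.2 + q.1 / q.2 - n / q.1 = -1}.Finite ∧
    Nat.card {p : ℤ × ℤ | p.1 * p.2 * (p.1 - p.2 - 1) = n} =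
      Nat.card {q : ℤ × ℤ | q.1 ≠ 0 ∧ q.2 ≠ 0 ∧ q.1 ∣ n ∧ q.2 ∣ q.1 ∧
        q.2 + q.1 / q.2 - n / q.1 = -1} := by
  set S := {p : ℤ × ℤ | p.1 * p.2 * (p.1 - p.2 - 1) = n} with hS
  set T := {q : ℤ × ℤ | q.1 ≠ 0 ∧ q.2 ≠ 0 ∧ q.1 ∣ n ∧ q.2 ∣ q.1 ∧
      q.2 + q.1 / q.2 - n / q.1 = -1} with hT
  have hSfin : S.Finite := by
    apply (((fin_dvd_set n hn).prod (fin_dvd_set n hn))).subset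
    rintro ⟨x, y⟩ hp
    simp only [hS, Set.mem_setOf_eq] at hp
    exact ⟨⟨y * (x - y - 1), by rw [← hp]; ring⟩, ⟨x * (x - y - 1), by rw [← hp]; ring⟩⟩
  have hTfin : T.Finite := by
    apply (((fin_dvd_set n hn).prod (fin_dvd_set n hn))).subset
    rintro ⟨d, δ⟩ ⟨_, _, hd, hδ, _⟩
    exact ⟨hd, hδ.trans hd⟩
  refine ⟨hSfin, hTfin, ?_⟩
  apply Nat.card_congr
  refine ⟨fun ⟨⟨x, y⟩, hp⟩ => ⟨⟨y * (x - y - 1), y⟩, ?_⟩,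
          fun ⟨⟨d, δ⟩, hq⟩ => ⟨⟨n / d, δ⟩, ?_⟩, ?_, ?_⟩
  · simp only [hS, Set.mem_setOf_eq] at hp
    have hx : x ≠ 0 := by rintro rfl; simp at hp; exact hn hp.symm
    have hy : y ≠ 0 := by rintro rfl; simp at hp; exact hn hp.symm
    have hz : x - y - 1 ≠ 0 := by
      intro h; rw [h, mul_zero] at hp; exact hn hp.symm
    have hd0 : y * (x - y - 1) ≠ 0 := mul_ne_zero hy hz
    refine ⟨hd0, hy, ⟨x, by rw [← hp]; ring⟩, ⟨x - y - 1, rfl⟩, ?_⟩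
    have h1 : y * (x - y - 1) / y = x - y - 1 := by
      rw [Int.mul_ediv_cancel_left _ hy]
    have h2 : n / (y * (x - y - 1)) = x := by
      rw [← hp]
      rw [show x * y * (x - y - 1) = (y * (x - y - 1)) * x by ring,
        Int.mul_ediv_cancel_left _ hd0]
    rw [h1, h2]; ring
  · obtain ⟨hd0, hδ0, hd, hδ, heq⟩ := hq
    simp only [] at hd0 hδ0 hd hδ heq
    simp only [hS, Set.mem_setOf_eq]
    have h1 : n / d - δ - 1 = d / δ := by omega
    rw [h1, mul_right_comm, mul_assoc, Int.ediv_mul_cancel hδ, Int.ediv_mul_cancel hd]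
  · rintro ⟨⟨x, y⟩, hp⟩
    simp only [hS, Set.mem_setOf_eq] at hp
    have hy : y ≠ 0 := by rintro rfl; simp at hp; exact hn hp.symm
    have hz : x - y - 1 ≠ 0 := by
      intro h; rw [h, mul_zero] at hp; exact hn hp.symm
    have hd0 : y * (x - y - 1) ≠ 0 := mul_ne_zero hy hz
    have h2 : n / (y * (x - y - 1)) = x := by
      rw [← hp, show x * y * (x - y - 1) = (y * (x - y - 1)) * x by ring,
        Int.mul_ediv_cancel_left _ hd0]
    simp [h2]
  · rintro ⟨⟨d, δ⟩, hd0, hδ0, hd, hδ, heq⟩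
    simp only [] at hd0 hδ0 hd hδ heq
    have h1 : n / d - δ - 1 = d / δ := by omega
    have : δ * (n / d - δ - 1) = d := by rw [h1, Int.mul_ediv_cancel' hδ]
    simp [this]
end
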